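/- Let Q̲ be a lower transition rate operator on functions f : 𝒳 → ℝ for a finite set 𝒳, and let δ ≥ 0. Then the operator I + δQ̲ is a lower transition operator if and only if δ·‖Q̲‖ ≤ 2, where ‖Q̲‖ is the operator norm induced by the maximum norm. -/

import Mathlib

open scoped BigOperators

set_option linter.unusedSectionVars false

variable {X : Type*} [Fintype X] [Nonempty X] [DecidableEq X]

/-- The maximum norm on real-valued functions on a finite state space. -/
noncomputable def maxNorm (f : X → ℝ) : ℝ := ⨆ x, |f x|

/-- The variation seminorm `max f - min f`. -/
noncomputable def varNorm (f : X → ℝ) : ℝ := (⨆ x, f x) - (⨅ x, f x)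

/-- The centred seminorm `(max f - min f)/2`. -/
noncomputable def centNorm (f : X → ℝ) : ℝ := ((⨆ x, f x) - (⨅ x, f x)) / 2

/-- Indicator function of the singleton `{x}`. -/
def indic (x : X) : X → ℝ := fun y => if y = x then 1 else 0

/-- A lower transition operator: dominates the minimum, is superadditive,
and is non-negatively homogeneous. -/
def IsLTO (T : (X → ℝ) → (X → ℝ)) : Prop :=
  (∀ f x, (⨅ y, f y) ≤ T f x) ∧
  (∀ f g x, T f x + T g x ≤ T (f + g) x) ∧
  (∀ (μ : ℝ), 0 ≤ μ → ∀ f, T (μ • f) = μ • T f)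

/-- A lower transition rate operator: vanishes on constants, is superadditive,
is non-negatively homogeneous, and is non-negative off the diagonal on indicators. -/
def IsLTRO (Q : (X → ℝ) → (X → ℝ)) : Prop :=
  (∀ γ : ℝ, Q (fun _ => γ) = 0) ∧
  (∀ f g x, Q f x + Q g x ≤ Q (f + g) x) ∧
  (∀ (μ : ℝ), 0 ≤ μ → ∀ f, Q (μ • f) = μ • Q f) ∧
  (∀ x y, x ≠ y → 0 ≤ Q (indic x) y)

/-- Operator norm induced by the maximum norm. -/
noncomputable def opNorm (A : (X → ℝ) → (X → ℝ)) : ℝ :=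
  sSup {r | ∃ f : X → ℝ, maxNorm f = 1 ∧ r = maxNorm (A f)}

/-- The (weak) coefficient of ergodicity. -/
noncomputable def coeffErg (A : (X → ℝ) → (X → ℝ)) : ℝ :=
  sSup {r | ∃ f : X → ℝ, (∀ x, 0 ≤ f x ∧ f x ≤ 1) ∧ r = varNorm (A f)}

section AuxLemmas
variable {Q : (X → ℝ) → (X → ℝ)}

lemma Q_zero' (hQ : IsLTRO Q) : Q 0 = 0 := by
  have h := hQ.1 0
  have : (fun _ : X => (0:ℝ)) = 0 := rfl
  rwa [this] at h

lemma Q_add_const' (hQ : IsLTRO Q) (f : X → ℝ) (γ : ℝ) :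
    Q (f + fun _ => γ) = Q f := by
  funext x
  apply le_antisymm
  · have h := hQ.2.1 (f + fun _ => γ) (fun _ => -γ) x
    have e : (f + fun _ => γ) + (fun _ => -γ) = f := by funext y; simp
    rw [e, hQ.1 (-γ)] at h
    simpa using h
  · have h := hQ.2.1 f (fun _ => γ) x
    rw [hQ.1 γ] at h
    simpa using h

lemma Q_sum_le' (hQ : IsLTRO Q) {ι : Type*} (s : Finset ι) (g : ι → X → ℝ) (x : X) :
    (∑ i ∈ s, Q (g i) x) ≤ Q (∑ i ∈ s, g i) x := by
  classical
  induction s using Finset.cons_induction with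
  | empty => simp [Q_zero' hQ]
  | cons a s ha ih =>
      rw [Finset.sum_cons, Finset.sum_cons]
      calc Q (g a) x + ∑ i ∈ s, Q (g i) x ≤ Q (g a) x + Q (∑ i ∈ s, g i) x := by linarith
        _ ≤ Q (g a + ∑ i ∈ s, g i) x := hQ.2.1 _ _ x

lemma Q_nonneg_of' (hQ : IsLTRO Q) (h : X → ℝ) (hpos : ∀ y, 0 ≤ h y) (x : X)
    (hx : h x = 0) : 0 ≤ Q h x := by
  have hdecomp : h = ∑ y : X, h y • indic y := by
    funext z
    rw [Finset.sum_apply]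
    simp only [Pi.smul_apply, indic, smul_eq_mul, mul_ite, mul_one, mul_zero]
    rw [Finset.sum_ite_eq Finset.univ z h]
    simp
  rw [hdecomp]
  refine le_trans ?_ (Q_sum_le' hQ Finset.univ _ x)
  apply Finset.sum_nonneg
  intro y _
  rw [hQ.2.2.1 (h y) (hpos y) (indic y)]
  by_cases hyx : y = x
  · subst hyx; simp [hx]
  · simp only [Pi.smul_apply, smul_eq_mul]
    exact mul_nonneg (hpos y) (hQ.2.2.2 y x hyx)

lemma Q_lb' (hQ : IsLTRO Q) (f : X → ℝ) (hf : ∀ y, 0 ≤ f y) (x : X) :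
    f x * Q (indic x) x ≤ Q f x := by
  set g : X → ℝ := fun y => f y - f x * indic x y with hg
  have hgpos : ∀ y, 0 ≤ g y := by
    intro y
    by_cases hyx : y = x
    · subst hyx; simp [hg, indic]
    · simp [hg, indic, hyx, hf y]
  have hgx : g x = 0 := by simp [hg, indic]
  have hdecomp : f = (f x • indic x) + g := by funext y; simp [hg]
  have h1 := hQ.2.1 (f x • indic x) g x
  rw [← hdecomp, hQ.2.2.1 (f x) (hf x) (indic x)] at h1
  have h2 := Q_nonneg_of' hQ g hgpos x hgx
  simp only [Pi.smul_apply, smul_eq_mul] at h1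
  linarith

lemma Qindic_nonpos' (hQ : IsLTRO Q) (x : X) : Q (indic x) x ≤ 0 := by
  set g : X → ℝ := fun y => 1 - indic x y with hg
  have hgpos : ∀ y, 0 ≤ g y := by
    intro y; by_cases hyx : y = x <;> simp [hg, indic, hyx]
  have hgx : g x = 0 := by simp [hg, indic]
  have h1 := hQ.2.1 (indic x) g x
  have e : indic x + g = fun _ => (1:ℝ) := by funext y; simp [hg]
  rw [e, hQ.1 1] at h1
  have h2 := Q_nonneg_of' hQ g hgpos x hgx
  simp only [Pi.zero_apply] at h1
  linarith

end AuxLemmas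

section NormLemmas
variable {Q : (X → ℝ) → (X → ℝ)}

/-- pointwise bound: for ‖f‖ ≤ 1, |Q f x| ≤ 2 * (-(Q (indic x) x)). -/
lemma Q_pt_bound' (hQ : IsLTRO Q) (f : X → ℝ) (x : X) (hf : ∀ y, |f y| ≤ 1) :
    |Q f x| ≤ 2 * (-(Q (indic x) x)) := by
  set m : ℝ := ⨅ y, f y with hm
  set M : ℝ := ⨆ y, f y with hM
  have hmle : ∀ y, m ≤ f y := fun y => ciInf_le (Finite.bddBelow_range _) y
  have hMge : ∀ y, f y ≤ M := fun y => le_ciSup (Finite.bddAbove_range _) y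
  have hm1 : -1 ≤ m := le_ciInf fun y => (abs_le.mp (hf y)).1
  have hM1 : M ≤ 1 := ciSup_le fun y => (abs_le.mp (hf y)).2
  have hCx : Q (indic x) x ≤ 0 := Qindic_nonpos' hQ x
  -- lower bound
  have e1 : (f + fun _ => -m) = fun y => f y - m := by funext y; simp [sub_eq_add_neg]
  have hQf : Q (fun y => f y - m) = Q f := by rw [← e1, Q_add_const' hQ f (-m)]
  have hlb : (f x - m) * Q (indic x) x ≤ Q f x := by
    rw [← hQf]
    exact Q_lb' hQ (fun y => f y - m) (fun y => sub_nonneg.mpr (hmle y)) x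
  -- upper bound
  have e2 : ((fun y => -f y) + fun _ => M) = fun y => M - f y := by
    funext y; simp [sub_eq_add_neg]; ring
  have hQnf : Q (fun y => M - f y) = Q (fun y => -f y) := by
    rw [← e2, Q_add_const' hQ _ M]
  have hnf : (M - f x) * Q (indic x) x ≤ Q (fun y => -f y) x := by
    rw [← hQnf]
    exact Q_lb' hQ (fun y => M - f y) (fun y => sub_nonneg.mpr (hMge y)) x
  have hsum : Q f x + Q (fun y => -f y) x ≤ 0 := by
    have h := hQ.2.1 f (fun y => -f y) x
    have e : f + (fun y => -f y) = fun _ => (0:ℝ) := by funext y; simp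
    rw [e, hQ.1 0] at h
    simpa using h
  have h1 : f x - m ≤ 2 := by have := hMge x; linarith
  have h2 : M - f x ≤ 2 := by have := hmle x; linarith
  have h1' : 0 ≤ f x - m := by have := hmle x; linarith
  have h2' : 0 ≤ M - f x := by have := hMge x; linarith
  rw [abs_le]
  constructor
  · nlinarith
  · nlinarith

lemma opNorm_eq' (hQ : IsLTRO Q) :
    opNorm Q = 2 * (⨆ x, -(Q (indic x) x)) := by
  set C : X → ℝ := fun x => -(Q (indic x) x) with hC
  set S : Set ℝ := {r | ∃ f : X → ℝ, maxNorm f = 1 ∧ r = maxNorm (Q f)} with hS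
  have hCmax : ∀ x, C x ≤ ⨆ y, C y := fun x => le_ciSup (Finite.bddAbove_range _) x
  have hSbdd : ∀ r ∈ S, r ≤ 2 * (⨆ y, C y) := by
    rintro r ⟨f, hf1, rfl⟩
    have hfy : ∀ y, |f y| ≤ 1 := by
      intro y
      have h := le_ciSup (Finite.bddAbove_range (fun z => |f z|)) y
      simp only [maxNorm] at hf1
      rw [hf1] at h
      exact h
    simp only [maxNorm]
    refine ciSup_le fun x => ?_
    calc |Q f x| ≤ 2 * C x := Q_pt_bound' hQ f x hfy
      _ ≤ 2 * (⨆ y, C y) := by have := hCmax x; linarith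
  have hbdd : BddAbove S := ⟨2 * ⨆ y, C y, hSbdd⟩
  apply le_antisymm
  · apply csSup_le
    · exact ⟨maxNorm (Q (fun _ => 1)), (fun _ => (1:ℝ)), by simp [maxNorm], rfl⟩
    · exact hSbdd
  · -- lower bound: use f = 2·indic x - 1 for the maximizing x
    obtain ⟨x, hx⟩ := Finite.exists_max C
    have hsup_le : (⨆ y, C y) ≤ C x := ciSup_le hx
    set f : X → ℝ := fun y => 2 * indic x y - 1 with hf
    have hnorm : maxNorm f = 1 := by
      have habs : ∀ y, |f y| = 1 := by
        intro y; by_cases hyx : y = x <;> norm_num [hf, indic, hyx]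
      simp only [maxNorm]
      rw [show (fun y => |f y|) = fun _ => (1:ℝ) from funext habs]
      exact ciSup_const
    have hQfeq : Q f = (2:ℝ) • Q (indic x) := by
      have e : f = ((2:ℝ) • indic x) + fun _ => (-1:ℝ) := by
        funext y; simp [hf, sub_eq_add_neg]
      rw [e, Q_add_const' hQ _ (-1), hQ.2.2.1 2 (by norm_num) (indic x)]
    have hmem : maxNorm (Q f) ∈ S := ⟨f, hnorm, rfl⟩
    have hge : 2 * C x ≤ maxNorm (Q f) := by
      have h1 : |Q f x| ≤ maxNorm (Q f) := by
        simp only [maxNorm]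
        exact le_ciSup (Finite.bddAbove_range (fun z => |Q f z|)) x
      have h2 : Q f x = 2 * Q (indic x) x := by rw [hQfeq]; simp
      have h3 : 2 * C x ≤ |Q f x| := by
        rw [h2, hC]
        calc 2 * -(Q (indic x) x) = -(2 * Q (indic x) x) := by ring
          _ ≤ |2 * Q (indic x) x| := neg_le_abs _
      linarith
    calc 2 * (⨆ y, C y) ≤ 2 * C x := by linarith
      _ ≤ maxNorm (Q f) := hge
      _ ≤ sSup S := le_csSup hbdd hmem

end NormLemmas
theorem stmt0 (Q : (X → ℝ) → (X → ℝ)) (hQ : IsLTRO Q) (δ : ℝ) (hδ : 0 ≤ δ) :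
    IsLTO (fun f => f + δ • Q f) ↔ δ * opNorm Q ≤ 2 := by
  rw [opNorm_eq' hQ]
  set C : X → ℝ := fun x => -(Q (indic x) x) with hC
  constructor
  · intro hT
    have hkey : ∀ x, δ * C x ≤ 1 := by
      intro x
      have h1 := hT.1 (indic x) x
      simp only [Pi.add_apply, Pi.smul_apply, smul_eq_mul] at h1
      have h2 : (0:ℝ) ≤ ⨅ y, indic x y := by
        apply le_ciInf
        intro y
        by_cases hyx : y = x <;> simp [indic, hyx]
      have h3 : indic x x = 1 := by simp [indic]
      rw [h3] at h1
      simp only [hC]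
      nlinarith
    obtain ⟨x, hx⟩ := Finite.exists_max C
    have hsup : (⨆ y, C y) ≤ C x := ciSup_le hx
    have hδC : δ * (⨆ y, C y) ≤ δ * C x := mul_le_mul_of_nonneg_left hsup hδ
    have := hkey x
    nlinarith
  · intro h
    have hkey : ∀ x, δ * C x ≤ 1 := by
      intro x
      have h1 : C x ≤ ⨆ y, C y := le_ciSup (Finite.bddAbove_range _) x
      have h2 : δ * C x ≤ δ * (⨆ y, C y) := mul_le_mul_of_nonneg_left h1 hδ
      nlinarith
    refine ⟨?_, ?_, ?_⟩
    · intro f x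
      simp only [Pi.add_apply, Pi.smul_apply, smul_eq_mul]
      set m : ℝ := ⨅ y, f y with hm
      have hmle : ∀ y, m ≤ f y := fun y => ciInf_le (Finite.bddBelow_range _) y
      have e1 : (f + fun _ => -m) = fun y => f y - m := by
        funext y; simp [sub_eq_add_neg]
      have hQf : Q (fun y => f y - m) = Q f := by rw [← e1, Q_add_const' hQ f (-m)]
      have hlb : (f x - m) * Q (indic x) x ≤ Q f x := by
        rw [← hQf]
        exact Q_lb' hQ (fun y => f y - m) (fun y => sub_nonneg.mpr (hmle y)) x
      have hδQ : δ * ((f x - m) * Q (indic x) x) ≤ δ * Q f x :=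
        mul_le_mul_of_nonneg_left hlb hδ
      have hgx : 0 ≤ f x - m := sub_nonneg.mpr (hmle x)
      have hk := hkey x
      simp only [hC] at hk
      nlinarith [mul_le_mul_of_nonneg_left hk hgx]
    · intro f g x
      simp only [Pi.add_apply, Pi.smul_apply, smul_eq_mul]
      have h1 := hQ.2.1 f g x
      have h2 : δ * (Q f x + Q g x) ≤ δ * Q (f + g) x := mul_le_mul_of_nonneg_left h1 hδ
      linarith
    · intro μ hμ f
      show μ • f + δ • Q (μ • f) = μ • (f + δ • Q f)
      rw [hQ.2.2.1 μ hμ f]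
      funext x
      simp only [Pi.add_apply, Pi.smul_apply, smul_eq_mul]
      ring
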